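/- If s_0, s_1 ∈ ℝ are not eigenvalues of Λ, then for every T ∈ 𝒯_Λ one has F_{s_0}(F_{s_1}(T)) = F_{s_1}(F_{s_0}(T)). Moreover, if s_1 is not an eigenvalue of Λ and T ∈ D^i_Λ, then F_{s_1}(T) ∈ D^i_Λ and F_{λ_i}(F_{s_1}(T)) = F_{s_1}(F_{λ_i}(T)). -/

import Mathlib

open Matrix Filter Topology

attribute [local instance] Matrix.normedAddCommGroup Matrix.normedSpace

noncomputable section

attribute [local instance] Classical.propDecidable

/-- The first `n+1` columns of the `(n+2)×(n+2)` matrix `M` are linearly independent,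
i.e. `M` is *almost invertible*. -/
def AlmostInv {n : ℕ} (M : Matrix (Fin (n+2)) (Fin (n+2)) ℝ) : Prop :=
  LinearIndependent ℝ (fun j : Fin (n+1) => fun i => M i j.castSucc)

/-- `M = Q⋆ R⋆` with `Q⋆` orthogonal of determinant one and `R⋆` upper triangular
with positive diagonal except possibly at the last entry. -/
def IsQsRs {n : ℕ} (M Q R : Matrix (Fin (n+2)) (Fin (n+2)) ℝ) : Prop :=
  Qᵀ * Q = 1 ∧ Q.det = 1 ∧ (∀ i j : Fin (n+2), j < i → R i j = 0) ∧
    (∀ i : Fin (n+1), 0 < R i.castSucc i.castSucc) ∧ M = Q * R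

/-- `M = Q R` with `Q` orthogonal and `R` upper triangular with positive diagonal. -/
def IsQR {n : ℕ} (M Q R : Matrix (Fin (n+2)) (Fin (n+2)) ℝ) : Prop :=
  Qᵀ * Q = 1 ∧ (∀ i j : Fin (n+2), j < i → R i j = 0) ∧
    (∀ i : Fin (n+2), 0 < R i i) ∧ M = Q * R

/-- `E_n = diag(1, …, 1, -1)`. -/
def En (n : ℕ) : Matrix (Fin (n+2)) (Fin (n+2)) ℝ :=
  Matrix.diagonal (fun i => if i = Fin.last (n+1) then -1 else 1)

/-- The signed shifted QR step `F_s(T) = Q⋆ᵀ T Q⋆` where `T - s I = Q⋆ R⋆`. -/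
def Fs {n : ℕ} (s : ℝ) (T : Matrix (Fin (n+2)) (Fin (n+2)) ℝ) :
    Matrix (Fin (n+2)) (Fin (n+2)) ℝ :=
  if h : ∃ Q R, IsQsRs (T - s • 1) Q R then (h.choose)ᵀ * T * h.choose else 0

/-- The (plain) shifted QR step `Φ(T, s) = Qᵀ T Q` where `T - s I = Q R`. -/
def Phi {n : ℕ} (T : Matrix (Fin (n+2)) (Fin (n+2)) ℝ) (s : ℝ) :
    Matrix (Fin (n+2)) (Fin (n+2)) ℝ :=
  if h : ∃ Q R, IsQR (T - s • 1) Q R then (h.choose)ᵀ * T * h.choose else 0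

/-- `T` is symmetric and tridiagonal. -/
def SymTridiag {n : ℕ} (T : Matrix (Fin (n+2)) (Fin (n+2)) ℝ) : Prop :=
  Tᵀ = T ∧ ∀ i j : Fin (n+2), (i.val + 1 < j.val ∨ j.val + 1 < i.val) → T i j = 0

/-- `b(T)`, the lowest subdiagonal entry `T_{n, n-1}` (1-based). -/
def lowb {n : ℕ} (T : Matrix (Fin (n+2)) (Fin (n+2)) ℝ) : ℝ :=
  T (Fin.last (n+1)) ⟨n, by omega⟩

/-- `T` is unreduced: all subdiagonal entries are nonzero. -/
def Unreduced {n : ℕ} (T : Matrix (Fin (n+2)) (Fin (n+2)) ℝ) : Prop :=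
  ∀ i : Fin (n+1), T i.succ i.castSucc ≠ 0

/-- `𝒯_Λ`: real symmetric tridiagonal matrices with the same characteristic polynomial
as `Λ = diagonal lam`. -/
def TSet {n : ℕ} (lam : Fin (n+2) → ℝ) : Set (Matrix (Fin (n+2)) (Fin (n+2)) ℝ) :=
  {T | SymTridiag T ∧ T.charpoly = (Matrix.diagonal lam).charpoly}

/-- The deflation neighborhood `D^i_{Λ,ε}`. -/
def Dset {n : ℕ} (lam : Fin (n+2) → ℝ) (ε : ℝ) (i : Fin (n+2)) :
    Set (Matrix (Fin (n+2)) (Fin (n+2)) ℝ) :=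
  {T ∈ TSet lam | |lowb T| ≤ ε ∧
    |T (Fin.last (n+1)) (Fin.last (n+1)) - lam i| ≤ Real.sqrt 2 * ε}

/-- The deflation set `D^i_{Λ,0}`. -/
def D0 {n : ℕ} (lam : Fin (n+2) → ℝ) (i : Fin (n+2)) :
    Set (Matrix (Fin (n+2)) (Fin (n+2)) ℝ) :=
  {T ∈ TSet lam | lowb T = 0 ∧ T (Fin.last (n+1)) (Fin.last (n+1)) = lam i}

/-- The deflation domain `D^i_Λ`: matrices `T ∈ 𝒯_Λ` with `T - λ_i I` almost invertible. -/
def DD {n : ℕ} (lam : Fin (n+2) → ℝ) (i : Fin (n+2)) :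
    Set (Matrix (Fin (n+2)) (Fin (n+2)) ℝ) :=
  {T ∈ TSet lam | AlmostInv (T - lam i • 1)}

/-- A simple shift strategy. -/
def SimpleShift {n : ℕ} (lam : Fin (n+2) → ℝ)
    (σ : Matrix (Fin (n+2)) (Fin (n+2)) ℝ → ℝ) : Prop :=
  (∀ T ∈ TSet lam, σ (En n * T * En n) = σ T) ∧
  ∃ C > 0, ∀ T ∈ TSet lam, ∃ i : Fin (n+2), |σ T - lam i| ≤ C * |lowb T|

/-- The vector space of real symmetric tridiagonal matrices. -/
def STSpace (n : ℕ) : Submodule ℝ (Matrix (Fin (n+2)) (Fin (n+2)) ℝ) where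
  carrier := {T | SymTridiag T}
  add_mem' := by
    rintro a b ⟨ha1, ha2⟩ ⟨hb1, hb2⟩
    refine ⟨by rw [Matrix.transpose_add, ha1, hb1], fun i j h => ?_⟩
    simp [Matrix.add_apply, ha2 i j h, hb2 i j h]
  zero_mem' := ⟨Matrix.transpose_zero, fun i j _ => rfl⟩
  smul_mem' := by
    rintro c a ⟨ha1, ha2⟩
    refine ⟨by rw [Matrix.transpose_smul, ha1], fun i j h => ?_⟩
    simp [Matrix.smul_apply, ha2 i j h]

/-- `σ` is smooth near `A ⊆ 𝒯_Λ`: there are an open subset `U` of the vector space of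
symmetric tridiagonal matrices containing `A` and a `C^∞` function on `U` agreeing with
`σ` on `U ∩ 𝒯_Λ`. -/
def SmoothNear {n : ℕ} (lam : Fin (n+2) → ℝ)
    (σ : Matrix (Fin (n+2)) (Fin (n+2)) ℝ → ℝ)
    (A : Set (Matrix (Fin (n+2)) (Fin (n+2)) ℝ)) : Prop :=
  ∃ (U : Set (STSpace n)) (σt : STSpace n → ℝ),
    IsOpen U ∧
    (∀ T : STSpace n, (T : Matrix (Fin (n+2)) (Fin (n+2)) ℝ) ∈ A → T ∈ U) ∧
    ContDiffOn ℝ (⊤ : ℕ∞) σt U ∧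
    ∀ T : STSpace n, T ∈ U → (T : Matrix (Fin (n+2)) (Fin (n+2)) ℝ) ∈ TSet lam →
      σt T = σ (T : Matrix (Fin (n+2)) (Fin (n+2)) ℝ)

/-- The Frobenius norm `‖A‖ = √(trace(Aᵀ A))`. -/
def frobNorm {n : ℕ} (A : Matrix (Fin (n+2)) (Fin (n+2)) ℝ) : ℝ :=
  Real.sqrt (Matrix.trace (Aᵀ * A))

end

noncomputable section AuxQR

attribute [local instance] Classical.propDecidable

namespace QRAux

open InnerProductSpace

variable {n : ℕ}

abbrev Mat (n : ℕ) := Matrix (Fin (n+2)) (Fin (n+2)) ℝ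

lemma almostInv_of_isUnit {M : Mat n} (h : IsUnit M.det) : AlmostInv M := by
  have h2 : LinearIndependent ℝ (fun j => Mᵀ j) :=
    Matrix.linearIndependent_cols_iff_isUnit.2 ((Matrix.isUnit_iff_isUnit_det _).2 h)
  have h3 := h2.comp Fin.castSucc (Fin.castSucc_injective _)
  exact h3

lemma almostInv_unit_mul {A M : Mat n} (hA : IsUnit A.det) (hM : AlmostInv M) :
    AlmostInv (A * M) := by
  have hinj : Function.Injective A.mulVecLin :=
    Matrix.mulVec_injective_iff_isUnit.2 ((Matrix.isUnit_iff_isUnit_det _).2 hA)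
  have := LinearIndependent.map' hM A.mulVecLin (LinearMap.ker_eq_bot.2 hinj)
  exact this

lemma almostInv_mul_upper {M U : Mat n} (hM : AlmostInv M)
    (hU : ∀ i j : Fin (n+2), j < i → U i j = 0) (hdet : IsUnit U.det) :
    AlmostInv (M * U) := by
  have hprod : ∏ i, U i i ≠ 0 := by
    rw [Matrix.det_of_upperTriangular (by exact fun i j h => hU i j h)] at hdet
    exact hdet.ne_zero
  have hdiag : ∀ i, U i i ≠ 0 := fun i hi =>
    hprod (Finset.prod_eq_zero (Finset.mem_univ i) hi)
  -- the (n+1)×(n+1) leading block of U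
  set S : Matrix (Fin (n+1)) (Fin (n+1)) ℝ :=
    Matrix.of (fun k j => U k.castSucc j.castSucc) with hS
  have hStri : ∀ i j : Fin (n+1), j < i → S i j = 0 := fun i j h =>
    hU _ _ (by simpa [Fin.castSucc_lt_castSucc_iff] using h)
  have hSdet : IsUnit S.det := by
    rw [Matrix.det_of_upperTriangular (by exact fun i j h => hStri i j h)]
    exact (Finset.prod_ne_zero_iff.2 (fun k _ => hdiag k.castSucc)).isUnit
  have hSinj : Function.Injective S.mulVec :=
    Matrix.mulVec_injective_iff_isUnit.2 ((Matrix.isUnit_iff_isUnit_det _).2 hSdet)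
  rw [AlmostInv, Fintype.linearIndependent_iff]
  intro g hg
  have hcol : ∀ (j : Fin (n+1)) (i : Fin (n+2)),
      (M * U) i j.castSucc = ∑ k' : Fin (n+1), M i k'.castSucc * U k'.castSucc j.castSucc := by
    intro j i
    rw [Matrix.mul_apply, Fin.sum_univ_castSucc]
    have h0 : U (Fin.last (n+1)) j.castSucc = 0 := hU _ _ (Fin.castSucc_lt_last j)
    simp [h0]
  have hzero : ∑ k' : Fin (n+1), (S.mulVec g k') • (fun i => M i k'.castSucc)
      = (0 : Fin (n+2) → ℝ) := by
    funext i
    simp only [Finset.sum_apply, Pi.smul_apply, smul_eq_mul, Pi.zero_apply]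
    have hgi := congrFun hg i
    simp only [Finset.sum_apply, Pi.smul_apply, smul_eq_mul, Pi.zero_apply] at hgi
    calc ∑ k' : Fin (n+1), S.mulVec g k' * M i k'.castSucc
        = ∑ k' : Fin (n+1), ∑ j : Fin (n+1), (U k'.castSucc j.castSucc * g j) * M i k'.castSucc := by
          refine Finset.sum_congr rfl fun k' _ => ?_
          rw [Matrix.mulVec, dotProduct, Finset.sum_mul]
          simp only [hS, Matrix.of_apply]
      _ = ∑ j : Fin (n+1), g j * ((M * U) i j.castSucc) := by
          rw [Finset.sum_comm]
          refine Finset.sum_congr rfl fun j _ => ?_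
          rw [hcol j i, Finset.mul_sum]
          exact Finset.sum_congr rfl fun k' _ => by ring
      _ = 0 := hgi
  have key : ∀ k', S.mulVec g k' = 0 := Fintype.linearIndependent_iff.1 hM _ hzero
  have hg0 : g = 0 := by
    apply hSinj
    ext k'
    rw [key, Matrix.mulVec_zero, Pi.zero_apply]
  intro j; rw [hg0]; rfl


lemma orth_mul_self {Q : Mat n} (h : Qᵀ * Q = 1) : Q * Qᵀ = 1 :=
  mul_eq_one_comm.1 h

lemma orth_det_sq {Q : Mat n} (h : Qᵀ * Q = 1) : Q.det * Q.det = 1 := by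
  have := congrArg Matrix.det h
  rwa [Matrix.det_mul, Matrix.det_transpose, Matrix.det_one] at this

lemma IsQsRs.R_eq {M Q R : Mat n} (h : IsQsRs M Q R) : R = Qᵀ * M := by
  rw [h.2.2.2.2, ← Matrix.mul_assoc, h.1, Matrix.one_mul]

lemma IsQsRs.detR {M Q R : Mat n} (h : IsQsRs M Q R) : R.det = M.det := by
  rw [h.2.2.2.2, Matrix.det_mul, h.2.1, one_mul]

lemma qsrs_unique {M Q R Q' R' : Mat n} (h : IsQsRs M Q R) (h' : IsQsRs M Q' R') :
    Q = Q' ∧ R = R' := by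
  obtain ⟨hQ, hdQ, hRtri, hRpos, hQR⟩ := h
  obtain ⟨hQ', hdQ', hRtri', hRpos', hQR'⟩ := h'
  set U : Mat n := Qᵀ * Q' with hUdef
  have hQQt : Q * Qᵀ = 1 := orth_mul_self hQ
  have hQQt' : Q' * Q'ᵀ = 1 := orth_mul_self hQ'
  have hUorth : Uᵀ * U = 1 := by
    rw [hUdef, Matrix.transpose_mul, Matrix.transpose_transpose, Matrix.mul_assoc,
      ← Matrix.mul_assoc Q, hQQt, Matrix.one_mul, hQ']
  have hUUt : U * Uᵀ = 1 := orth_mul_self hUorth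
  have hUdet : U.det = 1 := by
    rw [hUdef, Matrix.det_mul, Matrix.det_transpose, hdQ, hdQ', one_mul]
  have hUR : U * R' = R := by
    rw [hUdef, Matrix.mul_assoc, ← hQR', (IsQsRs.R_eq ⟨hQ, hdQ, hRtri, hRpos, hQR⟩)]
  have hR'ne : ∀ j : Fin (n+1), R' j.castSucc j.castSucc ≠ 0 := fun j => (hRpos' j).ne'
  -- Columns of U: for j in the first n+1 columns, U's column j is e_j.
  have hcols : ∀ m : ℕ, ∀ j : Fin (n+1), (j : ℕ) = m → ∀ i : Fin (n+2),
      U i j.castSucc = if i = j.castSucc then 1 else 0 := by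
    intro m
    induction m using Nat.strong_induction_on with
    | _ m IH =>
      intro j hj
      have IH' : ∀ k : Fin (n+1), k < j → ∀ i : Fin (n+2),
          U i k.castSucc = if i = k.castSucc then 1 else 0 := by
        intro k hk
        have hkm : (k : ℕ) < m := hj ▸ (Fin.lt_iff_val_lt_val.1 hk)
        exact IH k hkm k rfl
      -- entries above the diagonal vanish by orthogonality with earlier columns
      have hup : ∀ i : Fin (n+2), i < j.castSucc → U i j.castSucc = 0 := by
        intro i hi
        have hi' : (i : ℕ) < n + 1 := lt_of_lt_of_le hi (Nat.lt_succ_iff.mp j.castSucc.isLt)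
        have hcoli : ∀ m' : Fin (n+2), U m' i = if m' = i then 1 else 0 := by
          intro m'
          have h := IH' ⟨i, hi'⟩ (by rw [Fin.lt_iff_val_lt_val]; exact hi) m'
          rwa [show ((⟨i, hi'⟩ : Fin (n+1)).castSucc : Fin (n+2)) = i from rfl] at h
        have horth := congrFun (congrFun hUorth i) j.castSucc
        rw [Matrix.mul_apply] at horth
        rw [Finset.sum_eq_single i (fun m' _ hm' => by
          rw [Matrix.transpose_apply, hcoli m', if_neg hm', zero_mul]) (by simp)] at horth
        rw [Matrix.transpose_apply, hcoli i, if_pos rfl, one_mul,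
          Matrix.one_apply_ne (ne_of_lt hi)] at horth
        exact horth
      -- the key sum identity for i ≥ j.castSucc
      have hsum : ∀ i : Fin (n+2), j.castSucc ≤ i →
          U i j.castSucc * R' j.castSucc j.castSucc = R i j.castSucc := by
        intro i hi
        have hUR' := congrFun (congrFun hUR i) j.castSucc
        rw [Matrix.mul_apply] at hUR'
        rw [Finset.sum_eq_single j.castSucc (fun k _ hk => by
          rcases lt_or_gt_of_ne hk with hlt | hgt
          · have hk' : (k : ℕ) < n + 1 :=
              lt_of_lt_of_le hlt (Nat.lt_succ_iff.mp j.castSucc.isLt)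
            have hik : i ≠ k := fun h => absurd hlt (not_lt.2 (h ▸ hi))
            have h := IH' ⟨k, hk'⟩ (by rw [Fin.lt_iff_val_lt_val]; exact hlt) i
            rw [show ((⟨k, hk'⟩ : Fin (n+1)).castSucc : Fin (n+2)) = k from rfl] at h
            rw [h, if_neg hik, zero_mul]
          · rw [hRtri' k j.castSucc hgt, mul_zero]) (by simp)] at hUR'
        exact hUR'
      have hlow : ∀ i : Fin (n+2), j.castSucc < i → U i j.castSucc = 0 := by
        intro i hi
        have := hsum i (le_of_lt hi)
        rw [hRtri i j.castSucc hi] at this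
        exact (mul_eq_zero.1 this).resolve_right (hR'ne j)
      have hdiagpos : 0 < U j.castSucc j.castSucc := by
        have h1 := hsum j.castSucc le_rfl
        have h2 := hRpos j
        have h3 := hRpos' j
        nlinarith
      have hnorm : U j.castSucc j.castSucc * U j.castSucc j.castSucc = 1 := by
        have horth := congrFun (congrFun hUorth j.castSucc) j.castSucc
        rw [Matrix.mul_apply] at horth
        rw [Finset.sum_eq_single j.castSucc (fun m' _ hm' => by
          rcases lt_or_gt_of_ne hm' with hlt | hgt
          · rw [Matrix.transpose_apply, hup m' hlt, zero_mul]
          · rw [Matrix.transpose_apply, hlow m' hgt, zero_mul]) (by simp)] at horth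
        rw [Matrix.transpose_apply] at horth
        rw [horth, Matrix.one_apply_eq]
      have hdiag1 : U j.castSucc j.castSucc = 1 := by nlinarith
      intro i
      rcases lt_trichotomy i j.castSucc with h | h | h
      · rw [hup i h, if_neg (ne_of_lt h)]
      · rw [h, hdiag1, if_pos rfl]
      · rw [hlow i h, if_neg (ne_of_gt h)]
  have hcols' : ∀ j : Fin (n+1), ∀ i : Fin (n+2),
      U i j.castSucc = if i = j.castSucc then 1 else 0 := fun j => hcols j j rfl
  -- last column
  have hlastcol : ∀ i : Fin (n+2), i ≠ Fin.last (n+1) → U i (Fin.last (n+1)) = 0 := by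
    intro i hi
    obtain ⟨i', rfl⟩ := Fin.exists_castSucc_eq.2 hi
    have horth := congrFun (congrFun hUorth i'.castSucc) (Fin.last (n+1))
    rw [Matrix.mul_apply] at horth
    rw [Finset.sum_eq_single i'.castSucc (fun m' _ hm' => by
      rw [Matrix.transpose_apply, hcols' i' m', if_neg hm', zero_mul]) (by simp)] at horth
    rw [Matrix.transpose_apply, hcols' i' i'.castSucc, if_pos rfl, one_mul] at horth
    rw [horth, Matrix.one_apply_ne (Fin.castSucc_lt_last i').ne]
  set c : ℝ := U (Fin.last (n+1)) (Fin.last (n+1)) with hc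
  have hcsq : c * c = 1 := by
    have horth := congrFun (congrFun hUorth (Fin.last (n+1))) (Fin.last (n+1))
    rw [Matrix.mul_apply] at horth
    rw [Finset.sum_eq_single (Fin.last (n+1)) (fun m' _ hm' => by
      rw [Matrix.transpose_apply, hlastcol m' hm', zero_mul]) (by simp)] at horth
    rw [Matrix.transpose_apply] at horth
    rw [← hc] at horth
    rw [horth, Matrix.one_apply_eq]
  have hUdiag : U = Matrix.diagonal (fun i => if i = Fin.last (n+1) then c else 1) := by
    ext i k
    by_cases hk : k = Fin.last (n+1)
    · subst hk
      by_cases hik : i = Fin.last (n+1)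
      · subst hik; rw [Matrix.diagonal_apply_eq]; simp [hc]
      · rw [hlastcol i hik, Matrix.diagonal_apply_ne _ hik]
    · obtain ⟨k', rfl⟩ := Fin.exists_castSucc_eq.2 hk
      rw [hcols' k' i]
      by_cases hik : i = k'.castSucc
      · subst hik; rw [if_pos rfl, Matrix.diagonal_apply_eq, if_neg hk]
      · rw [if_neg hik, Matrix.diagonal_apply_ne _ hik]
  have hdetU : U.det = c := by
    rw [hUdiag, Matrix.det_diagonal, Fin.prod_univ_castSucc]
    simp [Fin.castSucc_lt_last, fun i : Fin (n+1) => (Fin.castSucc_lt_last i).ne]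
  have hc1 : c = 1 := by rw [← hdetU, hUdet]
  have hU1 : U = 1 := by
    rw [hUdiag, hc1]
    simp [Matrix.diagonal_one]
  have hQe : Q = Q' := by
    have : Q * U = Q' := by
      rw [hUdef, ← Matrix.mul_assoc, hQQt, Matrix.one_mul]
    rw [hU1, Matrix.mul_one] at this
    exact this
  refine ⟨hQe, ?_⟩
  rw [← hUR, hU1, Matrix.one_mul]

lemma En_mul_En : En n * En n = 1 := by
  have hfn : (fun i : Fin (n+2) => (if i = Fin.last (n+1) then (-1:ℝ) else 1) *
      (if i = Fin.last (n+1) then (-1:ℝ) else 1)) = fun _ => 1 := by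
    funext i
    by_cases h : i = Fin.last (n+1) <;> simp [h]
  rw [En, Matrix.diagonal_mul_diagonal, hfn, Matrix.diagonal_one]

lemma En_det : (En n).det = -1 := by
  rw [En, Matrix.det_diagonal, Fin.prod_univ_castSucc]
  simp [fun i : Fin (n+1) => (Fin.castSucc_lt_last i).ne]

lemma En_transpose : (En n)ᵀ = En n := Matrix.diagonal_transpose _

local notation "⟪" x ", " y "⟫" => @inner ℝ _ _ x y

lemma exists_isQsRs {M : Mat n} (hM : AlmostInv M) : ∃ Q R, IsQsRs M Q R := by
  classical
  haveI : WellFoundedLT (Fin (n+2)) := inferInstance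
  have hcard : Module.finrank ℝ (EuclideanSpace ℝ (Fin (n+2)))
      = Fintype.card (Fin (n+2)) := by
    rw [finrank_euclideanSpace]
  set f : Fin (n+2) → EuclideanSpace ℝ (Fin (n+2)) := fun j => WithLp.toLp 2 (fun i => M i j) with hf
  have hindep : LinearIndependent ℝ (fun j : Fin (n+1) => f j.castSucc) :=
    hM.map' (WithLp.linearEquiv 2 ℝ (Fin (n+2) → ℝ)).symm.toLinearMap (LinearEquiv.ker _)
  have hprefix : ∀ j : Fin (n+1),
      LinearIndependent ℝ (f ∘ ((↑) : Set.Iic (j.castSucc) → Fin (n+2))) := by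
    intro j
    have hmap : ∀ x : Set.Iic (j.castSucc), ((x : Fin (n+2)) : ℕ) < n + 1 := by
      rintro ⟨x, hx⟩
      have h1 : (x : ℕ) ≤ (j : ℕ) := by simpa [Fin.le_def] using hx
      have h2 : (j : ℕ) < n + 1 := j.isLt
      simpa using lt_of_le_of_lt h1 h2
    have hcomp : f ∘ ((↑) : Set.Iic (j.castSucc) → Fin (n+2)) =
        (fun k : Fin (n+1) => f k.castSucc) ∘
          (fun x : Set.Iic (j.castSucc) => (⟨((x : Fin (n+2)) : ℕ), hmap x⟩ : Fin (n+1))) := by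
      funext x
      rfl
    rw [hcomp]
    refine hindep.comp _ ?_
    intro x y hxy
    have : ((x : Fin (n+2)) : ℕ) = ((y : Fin (n+2)) : ℕ) := by
      simpa using congrArg Fin.val hxy
    exact Subtype.ext (Fin.ext this)
  set b : OrthonormalBasis (Fin (n+2)) ℝ (EuclideanSpace ℝ (Fin (n+2))) := gramSchmidtOrthonormalBasis hcard f with hb
  set Q : Mat n := Matrix.of (fun i j => b j i) with hQdef
  have hinner : ∀ (x y : EuclideanSpace ℝ (Fin (n+2))), ⟪x, y⟫ = ∑ k, x k * y k := by
    intro x y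
    rw [PiLp.inner_apply]
    simp [RCLike.inner_apply]
    exact Finset.sum_congr rfl fun _ _ => mul_comm _ _
  have hQQ : Qᵀ * Q = 1 := by
    ext i j
    rw [Matrix.mul_apply, Matrix.one_apply]
    have h := orthonormal_iff_ite.mp b.orthonormal i j
    rw [hinner] at h
    rw [← h]
    apply Finset.sum_congr rfl
    intro k _
    simp [hQdef]
  have hQQt : Q * Qᵀ = 1 := orth_mul_self hQQ
  set R : Mat n := Qᵀ * M with hRdef
  have hRinner : ∀ i j : Fin (n+2), R i j = ⟪b i, f j⟫ := by
    intro i j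
    rw [hRdef, Matrix.mul_apply, hinner]
    apply Finset.sum_congr rfl
    intro k _
    simp [hQdef, hf]
  have htri : ∀ i j : Fin (n+2), j < i → R i j = 0 := by
    intro i j hij
    rw [hRinner]
    exact gramSchmidtOrthonormalBasis_inv_triangular hcard f hij
  have hpos : ∀ j : Fin (n+1), 0 < R j.castSucc j.castSucc := by
    intro j
    rw [hRinner]
    have hgs : gramSchmidt ℝ f j.castSucc ≠ 0 :=
      gramSchmidt_ne_zero_coe j.castSucc (hprefix j)
    have hgsN : gramSchmidtNormed ℝ f j.castSucc ≠ 0 := by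
      have h1 := gramSchmidtNormed_unit_length_coe j.castSucc (hprefix j)
      intro h0
      rw [h0, norm_zero] at h1
      norm_num at h1
    rw [gramSchmidtOrthonormalBasis_apply hcard hgsN]
    unfold gramSchmidtNormed
    rw [real_inner_smul_left]
    have hip : ⟪gramSchmidt ℝ f j.castSucc, f j.castSucc⟫
        = ⟪gramSchmidt ℝ f j.castSucc, gramSchmidt ℝ f j.castSucc⟫ := by
      conv_lhs => rw [gramSchmidt_def' ℝ f j.castSucc]
      rw [inner_add_right, inner_sum]
      have hz : ∀ i ∈ Finset.Iio j.castSucc,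
          ⟪gramSchmidt ℝ f j.castSucc,
            ((ℝ ∙ gramSchmidt ℝ f i).starProjection (f j.castSucc))⟫ = 0 := by
        intro i hi
        rw [Submodule.starProjection_singleton, real_inner_smul_right]
        rw [gramSchmidt_orthogonal ℝ f (Finset.mem_Iio.1 hi).ne', mul_zero]
      rw [Finset.sum_eq_zero hz, add_zero]
    rw [hip, real_inner_self_eq_norm_sq]
    have hn : 0 < ‖gramSchmidt ℝ f j.castSucc‖ := norm_pos_iff.2 hgs
    positivity
  have hQR : M = Q * R := by
    rw [hRdef, ← Matrix.mul_assoc, hQQt, Matrix.one_mul]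
  have hdd := orth_det_sq hQQ
  rcases mul_self_eq_one_iff.1 hdd with hd | hd
  · exact ⟨Q, R, hQQ, hd, htri, hpos, hQR⟩
  · refine ⟨Q * En n, En n * R, ?_, ?_, ?_, ?_, ?_⟩
    · rw [Matrix.transpose_mul, En_transpose, Matrix.mul_assoc,
        ← Matrix.mul_assoc Qᵀ, hQQ, Matrix.one_mul, En_mul_En]
    · rw [Matrix.det_mul, En_det, hd]; ring
    · intro i j hij
      rw [En, Matrix.diagonal_mul, htri i j hij, mul_zero]
    · intro j
      rw [En, Matrix.diagonal_mul]
      rw [if_neg (Fin.castSucc_lt_last j).ne, one_mul]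
      exact hpos j
    · rw [Matrix.mul_assoc, ← Matrix.mul_assoc (En n), En_mul_En, Matrix.one_mul, ← hQR]

lemma Fs_eq {s : ℝ} {T Q R : Mat n} (h : IsQsRs (T - s • 1) Q R) :
    Fs s T = Qᵀ * T * Q := by
  have hex : ∃ Q R, IsQsRs (T - s • 1) Q R := ⟨Q, R, h⟩
  rw [Fs, dif_pos hex]
  obtain ⟨R₂, h₂⟩ := hex.choose_spec
  obtain ⟨hQe, -⟩ := qsrs_unique h₂ h
  rw [hQe]

lemma eval_charpoly' (A : Mat n) (s : ℝ) :
    (A.charpoly).eval s = (Matrix.diagonal (fun _ : Fin (n+2) => s) - A).det := by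
  rw [Matrix.charpoly, eval_det, matPolyEquiv_charmatrix]
  congr 1
  rw [Polynomial.eval_sub, Polynomial.eval_X, Polynomial.eval_C, Matrix.scalar_apply]

lemma smul_one_diag (s : ℝ) :
    (s • (1 : Mat n)) = Matrix.diagonal (fun _ : Fin (n+2) => s) := by
  ext i j
  by_cases h : i = j
  · subst h; simp
  · simp [Matrix.one_apply_ne h, Matrix.diagonal_apply_ne _ h]

lemma tset_det_unit {lam : Fin (n+2) → ℝ} {T : Mat n} (hT : T ∈ TSet lam) {s : ℝ}
    (hs : ∀ i, s ≠ lam i) : IsUnit (T - s • 1).det := by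
  have hdiag : (Matrix.diagonal (fun _ : Fin (n+2) => s) - T).det ≠ 0 := by
    rw [← eval_charpoly', hT.2, eval_charpoly']
    have : Matrix.diagonal (fun _ : Fin (n+2) => s) - Matrix.diagonal lam
        = Matrix.diagonal (fun i => s - lam i) := by
      rw [Matrix.diagonal_sub]
    rw [this, Matrix.det_diagonal]
    exact Finset.prod_ne_zero_iff.2 fun i _ => sub_ne_zero.2 (hs i)
  have hneg : T - s • 1 = -(Matrix.diagonal (fun _ : Fin (n+2) => s) - T) := by
    rw [neg_sub, smul_one_diag]
  rw [hneg, Matrix.det_neg]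
  exact ((isUnit_one.neg).pow _).mul (isUnit_iff_ne_zero.2 hdiag)

lemma charpoly_conj {Q A : Mat n} (hQ : Qᵀ * Q = 1) :
    (Qᵀ * A * Q).charpoly = A.charpoly := by
  classical
  set C' : ℝ →+* Polynomial ℝ := Polynomial.C with hC'
  have hmapmul : ∀ X Y : Mat n, ((X * Y).map C') = X.map C' * Y.map C' :=
    fun X Y => Matrix.map_mul
  have hQc : (Qᵀ.map C') * (Q.map C') = 1 := by
    rw [← hmapmul, hQ, Matrix.map_one C' (map_zero C') (map_one C')]
  have hcm : (Qᵀ.map C') * charmatrix A * (Q.map C') = charmatrix (Qᵀ * A * Q) := by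
    rw [charmatrix, charmatrix, RingHom.mapMatrix_apply, RingHom.mapMatrix_apply]
    rw [Matrix.mul_sub, Matrix.sub_mul]
    congr 1
    · rw [Matrix.mul_assoc,
        ((Matrix.scalar_commute (Polynomial.X : Polynomial ℝ)
          (fun r => Commute.all _ r) (Q.map C'))),
        ← Matrix.mul_assoc, hQc, Matrix.one_mul]
    · rw [← hmapmul, ← hmapmul]
  rw [Matrix.charpoly, Matrix.charpoly, ← hcm, Matrix.det_mul, Matrix.det_mul]
  have : (Qᵀ.map C').det * (Q.map C').det = 1 := by
    rw [← Matrix.det_mul, hQc, Matrix.det_one]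
  calc (Qᵀ.map C').det * (charmatrix A).det * (Q.map C').det
      = (Qᵀ.map C').det * (Q.map C').det * (charmatrix A).det := by ring
    _ = (charmatrix A).det := by rw [this, one_mul]

lemma conj_sub_smul {Q : Mat n} (hQ : Qᵀ * Q = 1) (T : Mat n) (a : ℝ) :
    Qᵀ * T * Q - a • 1 = Qᵀ * (T - a • 1) * Q := by
  rw [Matrix.mul_sub, Matrix.sub_mul]
  congr 1
  rw [Matrix.mul_smul, Matrix.mul_one, Matrix.smul_mul, hQ]

lemma shift_commute (T : Mat n) (a b : ℝ) :
    (T - a • 1) * (T - b • 1) = (T - b • 1) * (T - a • 1) := by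
  have c1 : Commute T T := Commute.refl T
  have c2 : Commute T (b • (1 : Mat n)) := (Commute.one_right T).smul_right b
  have c3 : Commute (a • (1 : Mat n)) T := (Commute.one_left T).smul_left a
  have c4 : Commute (a • (1 : Mat n)) (b • (1 : Mat n)) :=
    ((Commute.one_left (1 : Mat n)).smul_left a).smul_right b
  exact ((c1.sub_right c2).sub_left (c3.sub_right c4)).eq

lemma isQsRs_detR {M Q R : Mat n} (h : IsQsRs M Q R) (hM : IsUnit M.det) :
    IsUnit R.det := by
  rw [IsQsRs.detR h]; exact hM

lemma band_conj {T Q R : Mat n} {s : ℝ} (hT : SymTridiag T) (h : IsQsRs (T - s • 1) Q R)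
    (hdet : IsUnit (T - s • 1).det) : SymTridiag (Qᵀ * T * Q) := by
  have hQ := h.1
  have hQQt := orth_mul_self hQ
  have hQR : T - s • 1 = Q * R := h.2.2.2.2
  have hRtri := h.2.2.1
  have hRdet : IsUnit R.det := isQsRs_detR h hdet
  haveI := R.invertibleOfIsUnitDet hRdet
  have hRinv : R * R⁻¹ = 1 := Matrix.mul_nonsing_inv R hRdet
  have hRinvTri : ∀ i j : Fin (n+2), j < i → R⁻¹ i j = 0 := fun i j hij =>
    Matrix.blockTriangular_inv_of_blockTriangular
      (show R.BlockTriangular id from fun a b hab => hRtri a b hab) hij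
  have hQform : Q = (T - s • 1) * R⁻¹ := by
    rw [hQR, Matrix.mul_assoc, hRinv, Matrix.mul_one]
  have hQband : ∀ i k : Fin (n+2), (k : ℕ) + 1 < (i : ℕ) → Q i k = 0 := by
    intro i k hik
    rw [hQform, Matrix.mul_apply]
    apply Finset.sum_eq_zero
    intro l _
    rcases lt_or_ge ((l : ℕ) + 1) (i : ℕ) with hl | hl
    · have hne : i ≠ l := fun hw => by rw [hw] at hl; omega
      have hTl : (T - s • 1) i l = 0 := by
        rw [Matrix.sub_apply, hT.2 i l (Or.inr hl), Matrix.smul_apply,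
          Matrix.one_apply_ne hne, smul_zero, sub_zero]
      rw [hTl, zero_mul]
    · have hkl : k < l := by rw [Fin.lt_iff_val_lt_val]; omega
      rw [hRinvTri l k hkl, mul_zero]
  have hTform : T = Q * R + s • 1 := by
    rw [← hQR, sub_add_cancel]
  have hF : Qᵀ * T * Q = R * Q + s • 1 := by
    calc Qᵀ * T * Q = Qᵀ * (Q * R + s • 1) * Q := by rw [← hTform]
      _ = Qᵀ * (Q * R) * Q + Qᵀ * (s • 1) * Q := by
            rw [Matrix.mul_add, Matrix.add_mul]
      _ = (Qᵀ * Q) * (R * Q) + (s • (Qᵀ * Q)) := by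
            rw [Matrix.mul_smul, Matrix.mul_one, Matrix.smul_mul, Matrix.mul_assoc,
              Matrix.mul_assoc, Matrix.mul_assoc]
      _ = R * Q + s • 1 := by rw [hQ, Matrix.one_mul]
  have hsymm : (Qᵀ * T * Q)ᵀ = Qᵀ * T * Q := by
    rw [Matrix.transpose_mul, Matrix.transpose_mul, Matrix.transpose_transpose, hT.1,
      Matrix.mul_assoc]
  have hlow : ∀ a b : Fin (n+2), (b : ℕ) + 1 < (a : ℕ) → (Qᵀ * T * Q) a b = 0 := by
    intro a b hab
    have hne : a ≠ b := fun hw => by rw [hw] at hab; omega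
    rw [hF, Matrix.add_apply, Matrix.smul_apply, Matrix.one_apply_ne hne, smul_zero,
      add_zero, Matrix.mul_apply]
    apply Finset.sum_eq_zero
    intro k _
    rcases lt_or_ge (k : ℕ) (a : ℕ) with hk | hk
    · rw [hRtri a k (by rw [Fin.lt_iff_val_lt_val]; omega), zero_mul]
    · rw [hQband k b (by omega), mul_zero]
  refine ⟨hsymm, fun i j hij => ?_⟩
  rcases hij with h1 | h2
  · have : (Qᵀ * T * Q) i j = (Qᵀ * T * Q) j i := by
      conv_lhs => rw [← hsymm, Matrix.transpose_apply]
    rw [this]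
    exact hlow j i h1
  · exact hlow i j h2

lemma almostInv_conj_shift {T Q R : Mat n} {a b : ℝ} (h : IsQsRs (T - b • 1) Q R)
    (hdet : IsUnit (T - b • 1).det) (ha : AlmostInv (T - a • 1)) :
    AlmostInv (Qᵀ * T * Q - a • 1) := by
  have hQ := h.1
  have hQQt := orth_mul_self hQ
  have hQR : T - b • 1 = Q * R := h.2.2.2.2
  have hRtri := h.2.2.1
  have hRdet : IsUnit R.det := isQsRs_detR h hdet
  haveI := R.invertibleOfIsUnitDet hRdet
  have hXR : (Qᵀ * T * Q - a • 1) * R = R * (T - a • 1) := by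
    have h1 : (T - a • 1) * (Q * R) = Q * (R * (T - a • 1)) := by
      rw [← hQR, shift_commute, hQR, Matrix.mul_assoc]
    calc (Qᵀ * T * Q - a • 1) * R
        = (Qᵀ * (T - a • 1) * Q) * R := by rw [conj_sub_smul hQ]
      _ = Qᵀ * ((T - a • 1) * (Q * R)) := by simp only [Matrix.mul_assoc]
      _ = (Qᵀ * Q) * (R * (T - a • 1)) := by rw [h1]; simp only [Matrix.mul_assoc]
      _ = R * (T - a • 1) := by rw [hQ, Matrix.one_mul]
  have hX : Qᵀ * T * Q - a • 1 = (R * (T - a • 1)) * R⁻¹ := by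
    rw [← hXR, Matrix.mul_assoc _ R R⁻¹, Matrix.mul_nonsing_inv R hRdet, Matrix.mul_one]
  rw [hX]
  apply almostInv_mul_upper
  · exact almostInv_unit_mul hRdet ha
  · exact fun i j hij => Matrix.blockTriangular_inv_of_blockTriangular
      (show R.BlockTriangular id from fun p q hpq => hRtri p q hpq) hij
  · exact (Matrix.isUnit_nonsing_inv_det R hRdet)

lemma isQsRs_comp {A B : Mat n} {Q₁ R₁ Q₂ R₂ : Mat n}
    (h₁ : IsQsRs A Q₁ R₁) (h₂ : IsQsRs B Q₂ R₂) :
    IsQsRs (Q₁ * B * R₁) (Q₁ * Q₂) (R₂ * R₁) := by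
  obtain ⟨hQ1, hd1, ht1, hp1, he1⟩ := h₁
  obtain ⟨hQ2, hd2, ht2, hp2, he2⟩ := h₂
  refine ⟨?_, ?_, ?_, ?_, ?_⟩
  · rw [Matrix.transpose_mul, Matrix.mul_assoc, ← Matrix.mul_assoc Q₁ᵀ, hQ1,
      Matrix.one_mul, hQ2]
  · rw [Matrix.det_mul, hd1, hd2, one_mul]
  · intro i j hij
    rw [Matrix.mul_apply]
    apply Finset.sum_eq_zero
    intro k _
    rcases lt_or_ge k i with hk | hk
    · rw [ht2 i k hk, zero_mul]
    · rw [ht1 k j (lt_of_lt_of_le hij hk), mul_zero]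
  · intro j
    rw [Matrix.mul_apply]
    rw [Finset.sum_eq_single j.castSucc (fun k _ hk => by
      rcases lt_or_gt_of_ne hk with hlt | hgt
      · rw [ht2 j.castSucc k hlt, zero_mul]
      · rw [ht1 k j.castSucc hgt, mul_zero]) (by simp)]
    exact mul_pos (hp2 j) (hp1 j)
  · rw [he2, Matrix.mul_assoc, Matrix.mul_assoc, Matrix.mul_assoc]

lemma Fs_comm {T : Mat n} {a b : ℝ} (ha : AlmostInv (T - a • 1))
    (hb : IsUnit (T - b • 1).det) : Fs a (Fs b T) = Fs b (Fs a T) := by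
  obtain ⟨Q₁, R₁, h₁⟩ := exists_isQsRs (almostInv_of_isUnit hb)
  have hFb : Fs b T = Q₁ᵀ * T * Q₁ := Fs_eq h₁
  have hA2 : AlmostInv (Q₁ᵀ * T * Q₁ - a • 1) := almostInv_conj_shift h₁ hb ha
  obtain ⟨Q₂, R₂, h₂⟩ := exists_isQsRs hA2
  have h₂' : IsQsRs (Fs b T - a • 1) Q₂ R₂ := by rw [hFb]; exact h₂
  have hFab : Fs a (Fs b T) = Q₂ᵀ * (Q₁ᵀ * T * Q₁) * Q₂ := by rw [Fs_eq h₂', hFb]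
  obtain ⟨Q₁', R₁', h₁'⟩ := exists_isQsRs ha
  have hFa : Fs a T = Q₁'ᵀ * T * Q₁' := Fs_eq h₁'
  have hshift : Fs a T - b • 1 = Q₁'ᵀ * (T - b • 1) * Q₁' := by
    rw [hFa, conj_sub_smul h₁'.1]
  have hdet' : IsUnit (Fs a T - b • 1).det := by
    rw [hshift, Matrix.det_mul, Matrix.det_mul, Matrix.det_transpose, h₁'.2.1, one_mul,
      mul_one]
    exact hb
  obtain ⟨Q₂', R₂', h₂''⟩ := exists_isQsRs (almostInv_of_isUnit hdet')
  have hFba : Fs b (Fs a T) = Q₂'ᵀ * (Q₁'ᵀ * T * Q₁') * Q₂' := by rw [Fs_eq h₂'', hFa]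
  -- both give a QsRs factorization of P := (T - b•1) * (T - a•1)
  set P : Mat n := (T - b • 1) * (T - a • 1) with hP
  have hP1 : IsQsRs P (Q₁ * Q₂) (R₂ * R₁) := by
    have h₂c : IsQsRs (Q₁ᵀ * (T - a • 1) * Q₁) Q₂ R₂ := by
      rw [← conj_sub_smul h₁.1]; exact h₂
    have hcomp := isQsRs_comp h₁ h₂c
    have heq : Q₁ * (Q₁ᵀ * (T - a • 1) * Q₁) * R₁ = P := by
      calc Q₁ * (Q₁ᵀ * (T - a • 1) * Q₁) * R₁
          = (Q₁ * Q₁ᵀ) * ((T - a • 1) * (Q₁ * R₁)) := by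
            rw [Matrix.mul_assoc, Matrix.mul_assoc, Matrix.mul_assoc, Matrix.mul_assoc]
        _ = (T - a • 1) * (T - b • 1) := by
            rw [orth_mul_self h₁.1, Matrix.one_mul, ← h₁.2.2.2.2]
        _ = P := by rw [hP, shift_commute]
    rw [← heq]
    exact hcomp
  have hP2 : IsQsRs P (Q₁' * Q₂') (R₂' * R₁') := by
    have h₂c : IsQsRs (Q₁'ᵀ * (T - b • 1) * Q₁') Q₂' R₂' := by
      rw [← hshift]; exact h₂''
    have hcomp := isQsRs_comp h₁' h₂c
    have heq : Q₁' * (Q₁'ᵀ * (T - b • 1) * Q₁') * R₁' = P := by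
      calc Q₁' * (Q₁'ᵀ * (T - b • 1) * Q₁') * R₁'
          = (Q₁' * Q₁'ᵀ) * ((T - b • 1) * (Q₁' * R₁')) := by
            rw [Matrix.mul_assoc, Matrix.mul_assoc, Matrix.mul_assoc, Matrix.mul_assoc]
        _ = (T - b • 1) * (T - a • 1) := by
            rw [orth_mul_self h₁'.1, Matrix.one_mul, ← h₁'.2.2.2.2]
    rw [← heq]
    exact hcomp
  obtain ⟨hQeq, -⟩ := qsrs_unique hP1 hP2
  have hfab : Fs a (Fs b T) = (Q₁ * Q₂)ᵀ * T * (Q₁ * Q₂) := by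
    rw [hFab]
    simp only [Matrix.transpose_mul, Matrix.mul_assoc]
  have hfba : Fs b (Fs a T) = (Q₁' * Q₂')ᵀ * T * (Q₁' * Q₂') := by
    rw [hFba]
    simp only [Matrix.transpose_mul, Matrix.mul_assoc]
  rw [hfab, hfba, hQeq]

end QRAux
end AuxQR

theorem stmt8 (n : ℕ) (lam : Fin (n+2) → ℝ) (hlam : StrictMono lam) (s₀ s₁ : ℝ) :
    ((∀ i : Fin (n+2), s₀ ≠ lam i) → (∀ i : Fin (n+2), s₁ ≠ lam i) →
      ∀ T ∈ TSet lam, Fs s₀ (Fs s₁ T) = Fs s₁ (Fs s₀ T)) ∧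
    ((∀ i : Fin (n+2), s₁ ≠ lam i) → ∀ i : Fin (n+2), ∀ T ∈ DD lam i,
      Fs s₁ T ∈ DD lam i ∧ Fs (lam i) (Fs s₁ T) = Fs s₁ (Fs (lam i) T)) := by
  constructor
  · intro h0 h1 T hT
    exact QRAux.Fs_comm (QRAux.almostInv_of_isUnit (QRAux.tset_det_unit hT h0))
      (QRAux.tset_det_unit hT h1)
  · intro h1 i T hT
    obtain ⟨hT1, hT2⟩ := hT
    have hb : IsUnit (T - s₁ • 1).det := QRAux.tset_det_unit hT1 h1
    obtain ⟨Q₁, R₁, hQR⟩ := QRAux.exists_isQsRs (QRAux.almostInv_of_isUnit hb)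
    have hFs : Fs s₁ T = Q₁ᵀ * T * Q₁ := QRAux.Fs_eq hQR
    refine ⟨⟨⟨?_, ?_⟩, ?_⟩, QRAux.Fs_comm hT2 hb⟩
    · rw [hFs]; exact QRAux.band_conj hT1.1 hQR hb
    · rw [hFs, QRAux.charpoly_conj hQR.1]; exact hT1.2
    · rw [hFs]; exact QRAux.almostInv_conj_shift hQR hb hT2
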